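/- Let X = {x_1,...,x_n} ⊆ {0,1}^d (n ≥ 2), let c_1,...,c_n ∈ {0,1}^{d''} each have Hamming weight exactly 0.25d'' and pairwise distance at least 0.37d'', let r = 10⌈d/d''⌉, and set A = {a_1,...,a_n, b_1,...,b_n} where a_i = x_i ∘ c_i^r and b_i = x̄_i ∘ 0^{r·d''}. Then max_{a ∈ A} min_{b ∈ A \ {a}} HD(a,b) = d + r·0.25d'' - min_{x ∈ X} max_{y ∈ X} HD(x,y). -/
import Mathlib

/-- `r`-fold repetition of a string `c` of length `d''`. -/
def repStr {d'' : ℕ} (hd : 0 < d'') (r : ℕ) (c : Fin d'' → Bool) : Fin (r * d'') → Bool :=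
  fun j => c ⟨j.val % d'', Nat.mod_lt _ hd⟩

lemma hd_card_filter {m : ℕ} (u v : Fin m → Bool) :
    hammingDist u v = ∑ i : Fin m, if u i ≠ v i then 1 else 0 := by
  simp only [hammingDist]
  rw [Finset.card_filter]

lemma hd_append {d m : ℕ} (u u' : Fin d → Bool) (v v' : Fin m → Bool) :
    hammingDist (Fin.append u v) (Fin.append u' v')
      = hammingDist u u' + hammingDist v v' := by
  simp only [hd_card_filter]
  rw [Fin.sum_univ_add]
  simp [Fin.append_left, Fin.append_right]

lemma sum_mod (f : ℕ → ℕ) (m : ℕ) (hf : ∀ i, f (i % m) = f i) (r : ℕ) :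
    ∑ i ∈ Finset.range (r * m), f i = r * ∑ i ∈ Finset.range m, f i := by
  induction r with
  | zero => simp
  | succ r ih =>
    rw [Nat.succ_mul, Finset.sum_range_add, ih]
    have h2 : ∀ i ∈ Finset.range m, f (r * m + i) = f i := by
      intro i _
      have hmod : (r * m + i) % m = i % m := by
        rw [Nat.add_comm, Nat.add_mul_mod_self_right]
      rw [← hf (r * m + i), hmod, hf]
    rw [Finset.sum_congr rfl h2, Nat.succ_mul]

lemma hd_rep {d'' : ℕ} (hd : 0 < d'') (r : ℕ) (c c' : Fin d'' → Bool) :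
    hammingDist (repStr hd r c) (repStr hd r c') = r * hammingDist c c' := by
  have hg : ∀ (b : Fin d'' → Bool) (i : ℕ),
      b ⟨i % d'' % d'', Nat.mod_lt _ hd⟩ = b ⟨i % d'', Nat.mod_lt _ hd⟩ :=
    fun b i => congrArg b (Fin.ext (Nat.mod_mod_of_dvd _ dvd_rfl))
  have e1 : hammingDist (repStr hd r c) (repStr hd r c')
      = ∑ i ∈ Finset.range (r * d''),
          (fun t => if c ⟨t % d'', Nat.mod_lt _ hd⟩ ≠ c' ⟨t % d'', Nat.mod_lt _ hd⟩
            then (1:ℕ) else 0) i := by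
    rw [hd_card_filter]
    exact Fin.sum_univ_eq_sum_range
      (fun t => if c ⟨t % d'', Nat.mod_lt _ hd⟩ ≠ c' ⟨t % d'', Nat.mod_lt _ hd⟩
        then (1:ℕ) else 0) (r * d'')
  have e2 : hammingDist c c'
      = ∑ i ∈ Finset.range d'',
          (fun t => if c ⟨t % d'', Nat.mod_lt _ hd⟩ ≠ c' ⟨t % d'', Nat.mod_lt _ hd⟩
            then (1:ℕ) else 0) i := by
    rw [hd_card_filter]
    rw [← Fin.sum_univ_eq_sum_range
      (fun t => if c ⟨t % d'', Nat.mod_lt _ hd⟩ ≠ c' ⟨t % d'', Nat.mod_lt _ hd⟩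
        then (1:ℕ) else 0)]
    apply Finset.sum_congr rfl
    intro i _
    have : (⟨(i : ℕ) % d'', Nat.mod_lt _ hd⟩ : Fin d'') = i :=
      Fin.ext (Nat.mod_eq_of_lt i.isLt)
    rw [this]
  rw [e1, e2]
  apply sum_mod
  intro i
  simp only [hg c, hg c']

lemma hd_not {m : ℕ} (u v : Fin m → Bool) :
    hammingDist (fun k => !(u k)) (fun k => !(v k)) = hammingDist u v := by
  simp only [hammingDist]
  congr 1
  ext k
  simp only [Finset.mem_filter, Finset.mem_univ, true_and]
  cases u k <;> cases v k <;> simp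

lemma hd_notr {m : ℕ} (u v : Fin m → Bool) :
    hammingDist u (fun k => !(v k)) = m - hammingDist u v := by
  simp only [hammingDist]
  have h : (Finset.univ.filter fun i => u i ≠ !(v i))
      = Finset.univ.filter fun i => ¬ (u i ≠ v i) := by
    ext k
    simp only [Finset.mem_filter, Finset.mem_univ, true_and]
    cases u k <;> cases v k <;> simp
  rw [h, Finset.filter_not, Finset.card_sdiff_of_subset (Finset.filter_subset _ _)]
  simp

theorem closest_to_remotest_reduction {n d d'' : ℕ} (hn : 2 ≤ n) (hd : 1 ≤ d) (hd'' : 0 < d'')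
    (x : Fin n → Fin d → Bool) (c : Fin n → Fin d'' → Bool)
    (hw : ∀ i, 4 * (Finset.univ.filter fun j => c i j = true).card = d'')
    (hdist : ∀ i j, i ≠ j → 37 * d'' ≤ 100 * hammingDist (c i) (c j)) :
    let r := 10 * ((d + d'' - 1) / d'')
    let a : Fin n → Fin (d + r * d'') → Bool :=
      fun i => Fin.append (x i) (repStr hd'' r (c i))
    let b : Fin n → Fin (d + r * d'') → Bool :=
      fun i => Fin.append (fun j => !(x i j)) (fun _ => false)
    let A : Set (Fin (d + r * d'') → Bool) := Set.range a ∪ Set.range b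
    4 * sSup {m : ℕ | ∃ u ∈ A, m = sInf {k : ℕ | ∃ v ∈ A, v ≠ u ∧ k = hammingDist u v}}
      + 4 * sInf {m : ℕ | ∃ i : Fin n, m = sSup {k : ℕ | ∃ j : Fin n, k = hammingDist (x i) (x j)}}
      = 4 * d + r * d'' := by
  intro r a b A
  classical
  have hn0 : 0 < n := by omega
  have i0 : Fin n := ⟨0, hn0⟩
  -- weight of each c i
  have hwN : ∀ i, hammingDist (c i) (fun _ => false) = d'' / 4 := by
    intro i
    have h1 : hammingDist (c i) (fun _ => false)
        = (Finset.univ.filter fun j => c i j = true).card := by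
      simp only [hammingDist]
      congr 1
      ext k
      simp
    have h2 := hw i
    omega
  set N := d'' / 4 with hNdef
  have hN4 : 4 * N = d'' := by have := hw i0; omega
  have hNpos : 0 < N := by omega
  -- r facts
  have hq : d ≤ d'' * ((d + d'' - 1) / d'') := by
    have h1 := Nat.div_add_mod (d + d'' - 1) d''
    have h2 : (d + d'' - 1) % d'' < d'' := Nat.mod_lt _ hd''
    generalize hP : d'' * ((d + d'' - 1) / d'') = P at h1 ⊢
    generalize hQ : (d + d'' - 1) % d'' = Q at h1 h2
    omega
  have hr_pos : 0 < r := by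
    have h1 : 0 < (d + d'' - 1) / d'' := by
      rcases Nat.eq_zero_or_pos ((d + d'' - 1) / d'') with h | h
      · rw [h, Nat.mul_zero] at hq; omega
      · exact h
    show 0 < 10 * ((d + d'' - 1) / d'')
    omega
  have hrd : 10 * d ≤ r * d'' := by
    calc 10 * d ≤ 10 * (d'' * ((d + d'' - 1) / d'')) := Nat.mul_le_mul_left _ hq
      _ = r * d'' := by show _ = 10 * ((d + d'' - 1) / d'') * d''; ring
  obtain ⟨RN, hRN⟩ : ∃ z, r * N = z := ⟨_, rfl⟩
  have h4RN : 4 * RN = r * d'' := by rw [← hRN, ← hN4]; ring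
  have hdRN : d < RN := by
    have h1 := h4RN
    have h2 := hrd
    generalize hQ : r * d'' = Q at h1 h2
    omega
  -- distance formulas
  have hab : ∀ i j, hammingDist (a i) (b j)
      = (d - hammingDist (x i) (x j)) + RN := by
    intro i j
    show hammingDist (Fin.append (x i) (repStr hd'' r (c i)))
        (Fin.append (fun k => !(x j k)) (fun _ => false)) = _
    rw [hd_append, hd_notr]
    congr 1
    have h0 : (fun _ : Fin (r * d'') => false) = repStr hd'' r (fun _ => false) := rfl
    rw [h0, hd_rep, hwN i]
    exact hRN
  have haa : ∀ i j, hammingDist (a i) (a j)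
      = hammingDist (x i) (x j) + r * hammingDist (c i) (c j) := by
    intro i j
    show hammingDist (Fin.append (x i) (repStr hd'' r (c i)))
        (Fin.append (x j) (repStr hd'' r (c j))) = _
    rw [hd_append, hd_rep]
  have hbb : ∀ i j, hammingDist (b i) (b j) = hammingDist (x i) (x j) := by
    intro i j
    show hammingDist (Fin.append (fun k => !(x i k)) (fun _ => false))
        (Fin.append (fun k => !(x j k)) (fun _ => false)) = _
    rw [hd_append, hd_not, hammingDist_self, Nat.add_zero]
  have hxd : ∀ i j, hammingDist (x i) (x j) ≤ d := fun i j => by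
    simpa using (hammingDist_le_card_fintype :
      hammingDist (x i) (x j) ≤ Fintype.card (Fin d))
  have haa_big : ∀ i j, i ≠ j → d + RN < hammingDist (a i) (a j) := by
    intro i j hij
    rw [haa]
    have h1 := hdist i j hij
    have h2 : r * (37 * d'') ≤ r * (100 * hammingDist (c i) (c j)) :=
      Nat.mul_le_mul_left _ h1
    have h6 : r * (37 * d'') = 37 * (r * d'') := by ring
    have h7 : r * (100 * hammingDist (c i) (c j))
        = 100 * (r * hammingDist (c i) (c j)) := by ring
    rw [h6, h7] at h2
    have h3 := h4RN
    have h4 := hrd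
    have h8 : d + RN < r * hammingDist (c i) (c j) := by
      generalize hB : r * d'' = Q at h2 h3 h4
      generalize hC : r * hammingDist (c i) (c j) = R at h2 ⊢
      omega
    omega
  have hne_ab : ∀ i j, a i ≠ b j := by
    intro i j h
    have h1 : RN ≤ hammingDist (a i) (b j) := by rw [hab]; omega
    rw [h, hammingDist_self] at h1
    omega
  -- M, T
  set M := fun i : Fin n => sSup {k : ℕ | ∃ j : Fin n, k = hammingDist (x i) (x j)}
    with hMdef
  have hMbdd : ∀ i, BddAbove {k : ℕ | ∃ j : Fin n, k = hammingDist (x i) (x j)} :=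
    fun i => ⟨d, by rintro k ⟨j, rfl⟩; exact hxd i j⟩
  have hMle : ∀ i j, hammingDist (x i) (x j) ≤ M i :=
    fun i j => le_csSup (hMbdd i) ⟨j, rfl⟩
  have hMmem : ∀ i, ∃ j, M i = hammingDist (x i) (x j) :=
    fun i => Nat.sSup_mem
      (⟨hammingDist (x i) (x i), i, rfl⟩ :
        Set.Nonempty {k : ℕ | ∃ j : Fin n, k = hammingDist (x i) (x j)})
      (hMbdd i)
  have hMd : ∀ i, M i ≤ d := by
    intro i
    obtain ⟨j, hj⟩ := hMmem i
    rw [hj]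
    exact hxd i j
  set T := {m : ℕ | ∃ i : Fin n, m = M i} with hTdef
  have hTne : T.Nonempty := ⟨M i0, i0, rfl⟩
  obtain ⟨i1, hi1⟩ : ∃ i1, sInf T = M i1 := Nat.sInf_mem hTne
  have hTle : ∀ i, sInf T ≤ M i := fun i => Nat.sInf_le ⟨i, rfl⟩
  have hTd : sInf T ≤ d := by rw [hi1]; exact hMd i1
  -- inner inf at a i
  have hFa : ∀ i, sInf {k : ℕ | ∃ v ∈ A, v ≠ a i ∧ k = hammingDist (a i) v}
      = d - M i + RN := by
    intro i
    obtain ⟨j, hj⟩ := hMmem i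
    have hmem : (d - M i + RN)
        ∈ {k : ℕ | ∃ v ∈ A, v ≠ a i ∧ k = hammingDist (a i) v} :=
      ⟨b j, Set.mem_union_right _ ⟨j, rfl⟩,
        fun h => hne_ab i j h.symm, by rw [hab, ← hj]⟩
    apply le_antisymm (Nat.sInf_le hmem)
    apply le_csInf ⟨_, hmem⟩
    rintro k ⟨v, hv, hvne, rfl⟩
    have hv' : v ∈ Set.range a ∪ Set.range b := hv
    rcases hv' with ⟨j', rfl⟩ | ⟨j', rfl⟩
    · have hji : i ≠ j' := by rintro rfl; exact hvne rfl
      have h1 := haa_big i j' hji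
      omega
    · rw [hab]
      have h1 := hMle i j'
      omega
  -- inner inf at b i is small
  have hFb : ∀ i, sInf {k : ℕ | ∃ v ∈ A, v ≠ b i ∧ k = hammingDist (b i) v}
      ≤ d + RN - sInf T := by
    intro i
    by_cases hcase : ∀ j, x j = x i
    · have hM0 : M i1 = 0 := by
        obtain ⟨j, hj⟩ := hMmem i1
        rw [hj, hcase j, hcase i1, hammingDist_self]
      have hT0 : sInf T = 0 := by rw [hi1, hM0]
      have hval : hammingDist (b i) (a i) = d + RN := by
        rw [hammingDist_comm, hab, hammingDist_self, Nat.sub_zero]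
      calc sInf {k : ℕ | ∃ v ∈ A, v ≠ b i ∧ k = hammingDist (b i) v}
          ≤ hammingDist (b i) (a i) :=
            Nat.sInf_le ⟨a i, Set.mem_union_left _ ⟨i, rfl⟩, hne_ab i i, rfl⟩
        _ = d + RN := hval
        _ ≤ d + RN - sInf T := by omega
    · push_neg at hcase
      obtain ⟨j, hj⟩ := hcase
      have hbne : b j ≠ b i := by
        intro h
        apply hj
        have h1 : hammingDist (x j) (x i) = 0 := by
          rw [← hbb j i, h, hammingDist_self]
        exact hammingDist_eq_zero.mp h1
      calc sInf {k : ℕ | ∃ v ∈ A, v ≠ b i ∧ k = hammingDist (b i) v}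
          ≤ hammingDist (b i) (b j) :=
            Nat.sInf_le ⟨b j, Set.mem_union_right _ ⟨j, rfl⟩, hbne, rfl⟩
        _ = hammingDist (x i) (x j) := hbb i j
        _ ≤ d := hxd i j
        _ ≤ d + RN - sInf T := by omega
  -- the sup
  have hSval : sSup {m : ℕ | ∃ u ∈ A,
      m = sInf {k : ℕ | ∃ v ∈ A, v ≠ u ∧ k = hammingDist u v}}
      = d + RN - sInf T := by
    apply le_antisymm
    · apply csSup_le
      · exact ⟨d - M i0 + RN, a i0, Set.mem_union_left _ ⟨i0, rfl⟩, (hFa i0).symm⟩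
      rintro m ⟨u, hu, rfl⟩
      have hu' : u ∈ Set.range a ∪ Set.range b := hu
      rcases hu' with ⟨i, rfl⟩ | ⟨i, rfl⟩
      · rw [hFa i]
        have h1 := hTle i
        have h2 := hMd i
        omega
      · exact hFb i
    · apply le_csSup
      · refine ⟨d + RN, ?_⟩
        rintro m ⟨u, hu, rfl⟩
        have hu' : u ∈ Set.range a ∪ Set.range b := hu
        rcases hu' with ⟨i, rfl⟩ | ⟨i, rfl⟩
        · rw [hFa i]; omega
        · exact le_trans (hFb i) (by omega)
      · refine ⟨a i1, Set.mem_union_left _ ⟨i1, rfl⟩, ?_⟩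
        rw [hFa i1, hi1]
        have h1 := hMd i1
        omega
  rw [hSval, ← h4RN]
  omega
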